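/- If φ : M_n → M_k is given by a generalized Choi–Kraus representation φ(X) = Σ_{i=1}^m A_i X B_i with A_i ∈ M_{k,n} and B_i ∈ M_{n,k}, then ‖φ‖_cb ≤ ‖Σ_i A_i A_i*‖^{1/2} · ‖Σ_i B_i* B_i‖^{1/2}. -/

import Mathlib

open scoped ComplexOrder Matrix
open scoped Kronecker Matrix.Norms.L2Operator
set_option maxHeartbeats 1000000

/-- The amplification `id_m ⊗ φ` of a linear map on matrices. -/
noncomputable def ampl {n k : ℕ} (m : ℕ)
    (φ : Matrix (Fin n) (Fin n) ℂ →ₗ[ℂ] Matrix (Fin k) (Fin k) ℂ) :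
    Matrix (Fin m × Fin n) (Fin m × Fin n) ℂ →ₗ[ℂ]
      Matrix (Fin m × Fin k) (Fin m × Fin k) ℂ where
  toFun M := Matrix.of fun p q => φ (Matrix.of fun a b => M (p.1, a) (q.1, b)) p.2 q.2
  map_add' M N := by
    ext p q
    show φ (Matrix.of fun a b => (M + N) (p.1, a) (q.1, b)) p.2 q.2
        = φ (Matrix.of fun a b => M (p.1, a) (q.1, b)) p.2 q.2
          + φ (Matrix.of fun a b => N (p.1, a) (q.1, b)) p.2 q.2
    rw [show (Matrix.of fun a b => (M + N) (p.1, a) (q.1, b))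
        = (Matrix.of fun a b => M (p.1, a) (q.1, b))
          + (Matrix.of fun a b => N (p.1, a) (q.1, b)) from rfl, map_add]
    simp
  map_smul' c M := by
    ext p q
    show φ (Matrix.of fun a b => (c • M) (p.1, a) (q.1, b)) p.2 q.2
        = c • φ (Matrix.of fun a b => M (p.1, a) (q.1, b)) p.2 q.2
    rw [show (Matrix.of fun a b => (c • M) (p.1, a) (q.1, b))
        = c • (Matrix.of fun a b => M (p.1, a) (q.1, b)) from rfl, map_smul]
    simp

/-- Operator (spectral) norm of a square complex matrix. -/
noncomputable def opN {n : Type*} [Fintype n] [DecidableEq n] (X : Matrix n n ℂ) : ℝ :=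
  ‖(Matrix.toEuclideanCLM (𝕜 := ℂ) X : EuclideanSpace ℂ n →L[ℂ] EuclideanSpace ℂ n)‖

/-- Induced norm (w.r.t. operator norms) of a linear map between matrix algebras. -/
noncomputable def mapNorm {a b : Type*} [Fintype a] [DecidableEq a] [Fintype b] [DecidableEq b]
    (ψ : Matrix a a ℂ →ₗ[ℂ] Matrix b b ℂ) : ℝ :=
  sSup {r : ℝ | ∃ X : Matrix a a ℂ, opN X ≤ 1 ∧ r = opN (ψ X)}

/-- The completely bounded norm `sup_m ‖id_m ⊗ φ‖`. -/
noncomputable def cbNorm {n k : ℕ}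
    (φ : Matrix (Fin n) (Fin n) ℂ →ₗ[ℂ] Matrix (Fin k) (Fin k) ℂ) : ℝ :=
  ⨆ m : ℕ, mapNorm (ampl (m + 1) φ)

/-- Trace norm of a matrix: the trace of `√(XᴴX)`. -/
noncomputable def traceNorm {a b : Type*} [Fintype a] [Fintype b] [DecidableEq b]
    (X : Matrix a b ℂ) : ℝ :=
  (((Matrix.posSemidef_conjTranspose_mul_self X).1.eigenvectorUnitary.1 *
      Matrix.diagonal (((↑) : ℝ → ℂ) ∘ (√·) ∘ (Matrix.posSemidef_conjTranspose_mul_self X).1.eigenvalues) *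
      (star (Matrix.posSemidef_conjTranspose_mul_self X).1.eigenvectorUnitary : Matrix b b ℂ)).trace).re

/-- Induced trace-norm of a linear map between matrix algebras. -/
noncomputable def tMapNorm {a b : Type*} [Fintype a] [DecidableEq a] [Fintype b] [DecidableEq b]
    (ψ : Matrix a a ℂ →ₗ[ℂ] Matrix b b ℂ) : ℝ :=
  sSup {r : ℝ | ∃ X : Matrix a a ℂ, traceNorm X ≤ 1 ∧ r = traceNorm (ψ X)}


noncomputable def eCLM {m n : Type*} [Fintype m] [Fintype n] [DecidableEq n]
    (M : Matrix m n ℂ) : EuclideanSpace ℂ n →L[ℂ] EuclideanSpace ℂ m :=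
  (Matrix.toEuclideanLin.trans LinearMap.toContinuousLinearMap) M

lemma eCLM_add {m n : Type*} [Fintype m] [Fintype n] [DecidableEq n]
    (M N : Matrix m n ℂ) : eCLM (M + N) = eCLM M + eCLM N :=
  map_add (Matrix.toEuclideanLin.trans LinearMap.toContinuousLinearMap
    : Matrix m n ℂ ≃ₗ[ℂ] (EuclideanSpace ℂ n →L[ℂ] EuclideanSpace ℂ m)) M N

lemma eCLM_zero {m n : Type*} [Fintype m] [Fintype n] [DecidableEq n] :
    eCLM (0 : Matrix m n ℂ) = 0 :=
  map_zero (Matrix.toEuclideanLin.trans LinearMap.toContinuousLinearMap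
    : Matrix m n ℂ ≃ₗ[ℂ] (EuclideanSpace ℂ n →L[ℂ] EuclideanSpace ℂ m))

lemma eCLM_sum {m n ι : Type*} [Fintype m] [Fintype n] [DecidableEq n]
    (s : Finset ι) (M : ι → Matrix m n ℂ) :
    eCLM (∑ i ∈ s, M i) = ∑ i ∈ s, eCLM (M i) := by
  classical
  induction s using Finset.induction_on with
  | empty => simpa using eCLM_zero
  | insert _ _ h ih => rw [Finset.sum_insert h, Finset.sum_insert h, ← ih, eCLM_add]

lemma eCLM_apply_le {m n : Type*} [Fintype m] [Fintype n] [DecidableEq n]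
    (M : Matrix m n ℂ) (x : EuclideanSpace ℂ n) : ‖eCLM M x‖ ≤ ‖M‖ * ‖x‖ := by
  rw [show ‖M‖ = ‖eCLM M‖ from rfl]
  exact (eCLM M).le_opNorm x

lemma eCLM_mul {l m n : Type*} [Fintype l] [Fintype m] [Fintype n] [DecidableEq n] [DecidableEq l]
    (A : Matrix m n ℂ) (B : Matrix n l ℂ) : eCLM (A * B) = (eCLM A).comp (eCLM B) := by
  ext1 x
  exact congr($(Matrix.toLpLin_mul (q := 2) (p := 2) (r := 2) A B) x)

lemma eCLM_adjoint {m n : Type*} [Fintype m] [Fintype n] [DecidableEq n] [DecidableEq m]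
    (M : Matrix m n ℂ) : eCLM Mᴴ = ContinuousLinearMap.adjoint (eCLM M) := by
  unfold eCLM
  rw [LinearEquiv.trans_apply, LinearEquiv.trans_apply,
    Matrix.toEuclideanLin_conjTranspose_eq_adjoint, LinearMap.adjoint_toContinuousLinearMap]

local notation "⟪" x ", " y "⟫" => @inner ℂ _ _ x y

lemma core {I N K : Type*} [Fintype I] [Fintype N] [Fintype K] [DecidableEq N] [DecidableEq K]
    (A : I → Matrix K N ℂ) (B : I → Matrix N K ℂ) (X : Matrix N N ℂ) :
    ‖∑ i, A i * X * B i‖ ≤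
      Real.sqrt ‖∑ i, A i * (A i)ᴴ‖ * Real.sqrt ‖∑ i, (B i)ᴴ * B i‖ * ‖X‖ := by
  classical
  have hc0 : (0:ℝ) ≤ Real.sqrt ‖∑ i, A i * (A i)ᴴ‖ * Real.sqrt ‖∑ i, (B i)ᴴ * B i‖ * ‖X‖ := by
    positivity
  rw [show ‖∑ i, A i * X * B i‖ = ‖eCLM (∑ i, A i * X * B i)‖ from rfl]
  refine ContinuousLinearMap.opNorm_le_bound _ hc0 fun x => ?_
  set v : EuclideanSpace ℂ K := eCLM (∑ i, A i * X * B i) x with hv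
  have hvs : v = ∑ i, eCLM (A i) (eCLM X (eCLM (B i) x)) := by
    rw [hv, eCLM_sum, ContinuousLinearMap.sum_apply]
    exact Finset.sum_congr rfl fun i _ => by rw [eCLM_mul, eCLM_mul]; rfl
  have key1 : ∑ i, ‖(ContinuousLinearMap.adjoint (eCLM (A i))) v‖ ^ 2
      ≤ ‖∑ i, A i * (A i)ᴴ‖ * ‖v‖ ^ 2 := by
    have h1 : ∀ i, (‖(ContinuousLinearMap.adjoint (eCLM (A i))) v‖:ℝ) ^ 2
        = RCLike.re ⟪v, eCLM (A i * (A i)ᴴ) v⟫ := by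
      intro i
      rw [eCLM_mul, eCLM_adjoint, ContinuousLinearMap.comp_apply,
        ← ContinuousLinearMap.adjoint_inner_left]
      exact (inner_self_eq_norm_sq _).symm
    calc ∑ i, ‖(ContinuousLinearMap.adjoint (eCLM (A i))) v‖ ^ 2
        = RCLike.re ⟪v, eCLM (∑ i, A i * (A i)ᴴ) v⟫ := by
          rw [eCLM_sum, ContinuousLinearMap.sum_apply, inner_sum, map_sum]
          exact Finset.sum_congr rfl fun i _ => h1 i
      _ ≤ ‖⟪v, eCLM (∑ i, A i * (A i)ᴴ) v⟫‖ := RCLike.re_le_norm _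
      _ ≤ ‖v‖ * ‖eCLM (∑ i, A i * (A i)ᴴ) v‖ := norm_inner_le_norm _ _
      _ ≤ ‖v‖ * (‖∑ i, A i * (A i)ᴴ‖ * ‖v‖) := by
          gcongr
          exact eCLM_apply_le _ v
      _ = ‖∑ i, A i * (A i)ᴴ‖ * ‖v‖ ^ 2 := by ring
  have key2 : ∑ i, ‖eCLM (B i) x‖ ^ 2 ≤ ‖∑ i, (B i)ᴴ * B i‖ * ‖x‖ ^ 2 := by
    have h1 : ∀ i, (‖eCLM (B i) x‖:ℝ) ^ 2 = RCLike.re ⟪x, eCLM ((B i)ᴴ * B i) x⟫ := by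
      intro i
      rw [eCLM_mul, eCLM_adjoint, ContinuousLinearMap.comp_apply,
        ContinuousLinearMap.adjoint_inner_right]
      exact (inner_self_eq_norm_sq _).symm
    calc ∑ i, ‖eCLM (B i) x‖ ^ 2
        = RCLike.re ⟪x, eCLM (∑ i, (B i)ᴴ * B i) x⟫ := by
          rw [eCLM_sum, ContinuousLinearMap.sum_apply, inner_sum, map_sum]
          exact Finset.sum_congr rfl fun i _ => h1 i
      _ ≤ ‖⟪x, eCLM (∑ i, (B i)ᴴ * B i) x⟫‖ := RCLike.re_le_norm _
      _ ≤ ‖x‖ * ‖eCLM (∑ i, (B i)ᴴ * B i) x‖ := norm_inner_le_norm _ _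
      _ ≤ ‖x‖ * (‖∑ i, (B i)ᴴ * B i‖ * ‖x‖) := by
          gcongr
          exact eCLM_apply_le _ x
      _ = ‖∑ i, (B i)ᴴ * B i‖ * ‖x‖ ^ 2 := by ring
  set f : I → ℝ := fun i => ‖(ContinuousLinearMap.adjoint (eCLM (A i))) v‖ with hf
  set g : I → ℝ := fun i => ‖eCLM (B i) x‖ with hg
  have hmain : ‖v‖ ^ 2 ≤ ‖X‖ * ∑ i, f i * g i := by
    have hnn : (‖v‖:ℝ) ^ 2 = RCLike.re ⟪v, v⟫ := (inner_self_eq_norm_sq _).symm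
    rw [hnn]
    calc RCLike.re ⟪v, v⟫
          = RCLike.re ⟪v, ∑ i, eCLM (A i) (eCLM X (eCLM (B i) x))⟫ := by rw [← hvs]
      _ = ∑ i, RCLike.re ⟪v, eCLM (A i) (eCLM X (eCLM (B i) x))⟫ := by
          rw [inner_sum, map_sum]
      _ ≤ ∑ i, f i * (‖X‖ * g i) := by
          refine Finset.sum_le_sum fun i _ => ?_
          calc RCLike.re ⟪v, eCLM (A i) (eCLM X (eCLM (B i) x))⟫
              ≤ ‖⟪v, eCLM (A i) (eCLM X (eCLM (B i) x))⟫‖ := RCLike.re_le_norm _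
            _ = ‖⟪(ContinuousLinearMap.adjoint (eCLM (A i))) v, eCLM X (eCLM (B i) x)⟫‖ := by
                rw [ContinuousLinearMap.adjoint_inner_left]
            _ ≤ f i * ‖eCLM X (eCLM (B i) x)‖ := norm_inner_le_norm _ _
            _ ≤ f i * (‖X‖ * g i) :=
                mul_le_mul_of_nonneg_left (eCLM_apply_le _ _) (norm_nonneg _)
      _ = ‖X‖ * ∑ i, f i * g i := by
          rw [Finset.mul_sum]; exact Finset.sum_congr rfl fun i _ => by ring
  have hCS : ∑ i, f i * g i ≤ Real.sqrt (∑ i, f i ^ 2) * Real.sqrt (∑ i, g i ^ 2) := by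
    have h := Finset.sum_mul_sq_le_sq_mul_sq Finset.univ f g
    have h0 : (0:ℝ) ≤ ∑ i, f i * g i :=
      Finset.sum_nonneg fun i _ => mul_nonneg (norm_nonneg _) (norm_nonneg _)
    calc ∑ i, f i * g i = Real.sqrt ((∑ i, f i * g i) ^ 2) := (Real.sqrt_sq h0).symm
      _ ≤ Real.sqrt ((∑ i, f i ^ 2) * ∑ i, g i ^ 2) := Real.sqrt_le_sqrt h
      _ = Real.sqrt (∑ i, f i ^ 2) * Real.sqrt (∑ i, g i ^ 2) := Real.sqrt_mul
          (Finset.sum_nonneg fun i _ => sq_nonneg _) _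
  have h1 : Real.sqrt (∑ i, f i ^ 2) ≤ Real.sqrt ‖∑ i, A i * (A i)ᴴ‖ * ‖v‖ := by
    calc Real.sqrt (∑ i, f i ^ 2) ≤ Real.sqrt (‖∑ i, A i * (A i)ᴴ‖ * ‖v‖ ^ 2) :=
          Real.sqrt_le_sqrt key1
      _ = Real.sqrt ‖∑ i, A i * (A i)ᴴ‖ * ‖v‖ := by
          rw [Real.sqrt_mul (norm_nonneg _), Real.sqrt_sq (norm_nonneg _)]
  have h2 : Real.sqrt (∑ i, g i ^ 2) ≤ Real.sqrt ‖∑ i, (B i)ᴴ * B i‖ * ‖x‖ := by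
    calc Real.sqrt (∑ i, g i ^ 2) ≤ Real.sqrt (‖∑ i, (B i)ᴴ * B i‖ * ‖x‖ ^ 2) :=
          Real.sqrt_le_sqrt key2
      _ = Real.sqrt ‖∑ i, (B i)ᴴ * B i‖ * ‖x‖ := by
          rw [Real.sqrt_mul (norm_nonneg _), Real.sqrt_sq (norm_nonneg _)]
  have hfin : ‖v‖ ^ 2 ≤
      (Real.sqrt ‖∑ i, A i * (A i)ᴴ‖ * Real.sqrt ‖∑ i, (B i)ᴴ * B i‖ * ‖X‖ * ‖x‖) * ‖v‖ := by
    calc ‖v‖ ^ 2 ≤ ‖X‖ * ∑ i, f i * g i := hmain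
      _ ≤ ‖X‖ * (Real.sqrt (∑ i, f i ^ 2) * Real.sqrt (∑ i, g i ^ 2)) := by gcongr
      _ ≤ ‖X‖ * ((Real.sqrt ‖∑ i, A i * (A i)ᴴ‖ * ‖v‖) *
            (Real.sqrt ‖∑ i, (B i)ᴴ * B i‖ * ‖x‖)) := by
          gcongr
      _ = _ := by ring
  rcases eq_or_lt_of_le (norm_nonneg v) with h0 | h0
  · rw [← h0]
    positivity
  · rw [pow_two] at hfin
    exact le_of_mul_le_mul_right hfin h0


noncomputable instance matCStar {n : Type*} [Fintype n] [DecidableEq n] :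
    CStarAlgebra (Matrix n n ℂ) := Matrix.instCStarAlgebra

lemma kron_conjTranspose {P m n : Type*} [Fintype P] [DecidableEq P]
    (M : Matrix m n ℂ) :
    ((1 : Matrix P P ℂ) ⊗ₖ M)ᴴ = (1 : Matrix P P ℂ) ⊗ₖ Mᴴ := by
  ext ⟨p, a⟩ ⟨q, b⟩
  by_cases h : p = q <;>
    simp [Matrix.conjTranspose_apply, Matrix.kroneckerMap_apply, Matrix.one_apply, h, eq_comm]

lemma kron_sum {P m n ι : Type*} [Fintype P] [DecidableEq P] (s : Finset ι)
    (M : ι → Matrix m n ℂ) :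
    ∑ i ∈ s, (1 : Matrix P P ℂ) ⊗ₖ M i = (1 : Matrix P P ℂ) ⊗ₖ (∑ i ∈ s, M i) := by
  ext ⟨p, a⟩ ⟨q, b⟩
  simp [Matrix.sum_apply, Matrix.kroneckerMap_apply, Finset.mul_sum]

/-- `M ↦ 1 ⊗ₖ M` as a star algebra homomorphism. -/
noncomputable def kronHom (P : Type*) {n : Type*} [Fintype P] [DecidableEq P]
    [Fintype n] [DecidableEq n] :
    Matrix n n ℂ →⋆ₐ[ℂ] Matrix (P × n) (P × n) ℂ where
  toFun M := (1 : Matrix P P ℂ) ⊗ₖ M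
  map_one' := Matrix.one_kronecker_one
  map_mul' M N := by rw [← Matrix.mul_kronecker_mul, Matrix.one_mul]
  map_zero' := by ext ⟨p, a⟩ ⟨q, b⟩; simp
  map_add' M N := by
    ext ⟨p, a⟩ ⟨q, b⟩
    simp [Matrix.kroneckerMap_apply, mul_add]
  commutes' c := by
    ext ⟨p, a⟩ ⟨q, b⟩
    simp [Matrix.algebraMap_matrix_apply, Matrix.kroneckerMap_apply, Matrix.one_apply,
      Prod.ext_iff, ite_and]
    split <;> simp_all
  map_star' M := (kron_conjTranspose M).symm

lemma norm_kron_le {P n : Type*} [Fintype P] [DecidableEq P] [Fintype n] [DecidableEq n]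
    (M : Matrix n n ℂ) : ‖(1 : Matrix P P ℂ) ⊗ₖ M‖ ≤ ‖M‖ :=
  NonUnitalStarAlgHom.norm_apply_le (kronHom P) M

section FinalAux
open scoped Matrix Kronecker Matrix.Norms.L2Operator
open Matrix

lemma opN_eq {a : Type*} [Fintype a] [DecidableEq a] (X : Matrix a a ℂ) : opN X = ‖X‖ := rfl

lemma ampl_rep {n k m : ℕ} (m' : ℕ)
    (φ : Matrix (Fin n) (Fin n) ℂ →ₗ[ℂ] Matrix (Fin k) (Fin k) ℂ)
    (A : Fin m → Matrix (Fin k) (Fin n) ℂ) (B : Fin m → Matrix (Fin n) (Fin k) ℂ)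
    (hrep : ∀ X, φ X = ∑ i, A i * X * B i)
    (M : Matrix (Fin m' × Fin n) (Fin m' × Fin n) ℂ) :
    ampl m' φ M = ∑ i, ((1 : Matrix (Fin m') (Fin m') ℂ) ⊗ₖ A i) * M *
      ((1 : Matrix (Fin m') (Fin m') ℂ) ⊗ₖ B i) := by
  ext ⟨p, c⟩ ⟨q, d⟩
  show φ (Matrix.of fun a b => M (p, a) (q, b)) c d = _
  rw [hrep]
  simp only [Matrix.sum_apply, Matrix.mul_apply, Matrix.kroneckerMap_apply, Matrix.one_apply,
    Fintype.sum_prod_type, Matrix.of_apply, ite_mul, mul_ite, one_mul, mul_one, zero_mul,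
    mul_zero, Finset.sum_const_zero, Finset.sum_ite_irrel, Finset.sum_ite_eq, Finset.sum_ite_eq', Finset.mem_univ,
    if_true]

end FinalAux

/-- For any generalized Choi-Kraus representation `φ(X) = Σ A_i X B_i`,
`‖φ‖_cb ≤ ‖Σ A_i A_i*‖^(1/2) ⬝ ‖Σ B_i* B_i‖^(1/2)`. -/
theorem cbNorm_le_choiKraus_bound {n k m : ℕ}
    (φ : Matrix (Fin n) (Fin n) ℂ →ₗ[ℂ] Matrix (Fin k) (Fin k) ℂ)
    (A : Fin m → Matrix (Fin k) (Fin n) ℂ) (B : Fin m → Matrix (Fin n) (Fin k) ℂ)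
    (hrep : ∀ X, φ X = ∑ i, A i * X * B i) :
    cbNorm φ ≤ Real.sqrt (opN (∑ i, A i * (A i)ᴴ)) *
      Real.sqrt (opN (∑ i, (B i)ᴴ * B i)) := by
  classical
  have hb0 : (0:ℝ) ≤ Real.sqrt (opN (∑ i, A i * (A i)ᴴ)) *
      Real.sqrt (opN (∑ i, (B i)ᴴ * B i)) := by positivity
  refine Real.iSup_le (fun m' => ?_) hb0
  refine Real.sSup_le ?_ hb0
  rintro r ⟨X, hX, rfl⟩
  rw [opN_eq] at hX ⊢
  calc ‖ampl (m' + 1) φ X‖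
      = ‖∑ i, ((1 : Matrix (Fin (m'+1)) (Fin (m'+1)) ℂ) ⊗ₖ A i) * X *
          ((1 : Matrix (Fin (m'+1)) (Fin (m'+1)) ℂ) ⊗ₖ B i)‖ := by
        rw [ampl_rep (m'+1) φ A B hrep X]
    _ ≤ Real.sqrt ‖∑ i, ((1 : Matrix (Fin (m'+1)) (Fin (m'+1)) ℂ) ⊗ₖ A i) *
            ((1 : Matrix (Fin (m'+1)) (Fin (m'+1)) ℂ) ⊗ₖ A i)ᴴ‖ *
          Real.sqrt ‖∑ i, ((1 : Matrix (Fin (m'+1)) (Fin (m'+1)) ℂ) ⊗ₖ B i)ᴴ *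
            ((1 : Matrix (Fin (m'+1)) (Fin (m'+1)) ℂ) ⊗ₖ B i)‖ * ‖X‖ := core _ _ X
    _ = Real.sqrt ‖(1 : Matrix (Fin (m'+1)) (Fin (m'+1)) ℂ) ⊗ₖ (∑ i, A i * (A i)ᴴ)‖ *
          Real.sqrt ‖(1 : Matrix (Fin (m'+1)) (Fin (m'+1)) ℂ) ⊗ₖ (∑ i, (B i)ᴴ * B i)‖ * ‖X‖ := by
        have hA : ∑ i, ((1 : Matrix (Fin (m'+1)) (Fin (m'+1)) ℂ) ⊗ₖ A i) *
            ((1 : Matrix (Fin (m'+1)) (Fin (m'+1)) ℂ) ⊗ₖ A i)ᴴ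
            = (1 : Matrix (Fin (m'+1)) (Fin (m'+1)) ℂ) ⊗ₖ (∑ i, A i * (A i)ᴴ) := by
          rw [← kron_sum]
          exact Finset.sum_congr rfl fun i _ => by
            rw [kron_conjTranspose, ← Matrix.mul_kronecker_mul, Matrix.one_mul]
        have hB : ∑ i, ((1 : Matrix (Fin (m'+1)) (Fin (m'+1)) ℂ) ⊗ₖ B i)ᴴ *
            ((1 : Matrix (Fin (m'+1)) (Fin (m'+1)) ℂ) ⊗ₖ B i)
            = (1 : Matrix (Fin (m'+1)) (Fin (m'+1)) ℂ) ⊗ₖ (∑ i, (B i)ᴴ * B i) := by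
          rw [← kron_sum]
          exact Finset.sum_congr rfl fun i _ => by
            rw [kron_conjTranspose, ← Matrix.mul_kronecker_mul, Matrix.one_mul]
        rw [hA, hB]
    _ ≤ Real.sqrt ‖∑ i, A i * (A i)ᴴ‖ * Real.sqrt ‖∑ i, (B i)ᴴ * B i‖ * 1 := by
        gcongr
        · exact norm_kron_le _
        · exact norm_kron_le _
    _ = Real.sqrt (opN (∑ i, A i * (A i)ᴴ)) * Real.sqrt (opN (∑ i, (B i)ᴴ * B i)) := by
        rw [mul_one, opN_eq, opN_eq]
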